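/- Let f(x) = f_1(x₁) ∏_{ν=2}^d f_{ν|ν-1}(x_ν | x_{ν-1}) be a Markov density with m_ν the rank of the bivariate function f_{ν|ν-1}. Then for 2 ≤ ν ≤ d-1, rank_{{ν}}(f) ≤ m_ν m_{ν+1}, and rank_{{1}}(f) ≤ m₂, rank_{{d}}(f) ≤ m_d. -/

import Mathlib

/-- For a Markov density `f(x) = f₁(x₁) ∏_{ν=2}^d f_{ν|ν-1}(x_ν|x_{ν-1})`, with
`m_ν` the rank of the bivariate function `f_{ν|ν-1}`: for `2 ≤ ν ≤ d-1`,
`rank_{{ν}}(f) ≤ m_ν m_{ν+1}`; moreover `rank_{{1}}(f) ≤ m₂` and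
`rank_{{d}}(f) ≤ m_d`. -/
theorem markov_rank_singleton {E : Type*} (d : ℕ) (hd : 2 ≤ d)
    (f : (ℕ → E) → ℝ)
    (f₁ : E → ℝ) (trans : ℕ → E → E → ℝ)
    (hf : ∀ x, f x = f₁ (x 1) * ∏ i ∈ Finset.Icc 2 d, trans i (x i) (x (i - 1)))
    (m : ℕ → ℕ)
    (u : (i : ℕ) → Fin (m i) → E → ℝ) (v : (i : ℕ) → Fin (m i) → E → ℝ)
    (htr : ∀ i ∈ Finset.Icc 2 d, ∀ t s, trans i t s = ∑ k, u i k t * v i k s) :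
    (∀ ν, 2 ≤ ν → ν ≤ d - 1 →
      ∃ (a : Fin (m ν * m (ν + 1)) → E → ℝ)
        (b : Fin (m ν * m (ν + 1)) → ({i : ℕ // i ≠ ν} → E) → ℝ),
        ∀ x, f x = ∑ k, a k (x ν) * b k (fun i => x i.1)) ∧
    (∃ (a : Fin (m 2) → E → ℝ) (b : Fin (m 2) → ({i : ℕ // i ≠ 1} → E) → ℝ),
        ∀ x, f x = ∑ k, a k (x 1) * b k (fun i => x i.1)) ∧
    (∃ (a : Fin (m d) → E → ℝ) (b : Fin (m d) → ({i : ℕ // i ≠ d} → E) → ℝ),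
        ∀ x, f x = ∑ k, a k (x d) * b k (fun i => x i.1)) := by
  refine ⟨?_, ?_, ?_⟩
  · intro ν h2 hd1
    have hν : ν ∈ Finset.Icc 2 d := by simp only [Finset.mem_Icc]; omega
    have hν1 : ν + 1 ∈ (Finset.Icc 2 d).erase ν := by
      simp only [Finset.mem_erase, Finset.mem_Icc]; omega
    refine ⟨fun k e => u ν (finProdFinEquiv.symm k).1 e * v (ν+1) (finProdFinEquiv.symm k).2 e,
      fun k y => f₁ (y ⟨1, by omega⟩) * v ν (finProdFinEquiv.symm k).1 (y ⟨ν-1, by omega⟩)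
        * u (ν+1) (finProdFinEquiv.symm k).2 (y ⟨ν+1, by omega⟩)
        * ∏ i ∈ (((Finset.Icc 2 d).erase ν).erase (ν+1)).attach,
            trans i.1
              (y ⟨i.1, by
                have h := i.2
                rw [Finset.mem_erase, Finset.mem_erase, Finset.mem_Icc] at h
                omega⟩)
              (y ⟨i.1 - 1, by
                have h := i.2
                rw [Finset.mem_erase, Finset.mem_erase, Finset.mem_Icc] at h
                omega⟩), ?_⟩
    intro x
    rw [hf x, ← Finset.mul_prod_erase _ _ hν, ← Finset.mul_prod_erase _ _ hν1,
      htr ν hν, htr (ν+1) (Finset.mem_of_mem_erase hν1),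
      ← Equiv.sum_comp finProdFinEquiv
        (fun k => _ * (f₁ (x 1) * _ * _ * _)), Fintype.sum_prod_type]
    simp only [Equiv.symm_apply_apply, Nat.add_sub_cancel, Finset.mul_sum, Finset.sum_mul]
    rw [Finset.sum_comm]
    refine Finset.sum_congr rfl fun k _ => Finset.sum_congr rfl fun l _ => ?_
    rw [Finset.prod_attach _ (fun i => trans i (x i) (x (i - 1)))]
    ring
  · have h2 : (2:ℕ) ∈ Finset.Icc 2 d := by simp only [Finset.mem_Icc]; omega
    refine ⟨fun k e => f₁ e * v 2 k e,
      fun k y => u 2 k (y ⟨2, by omega⟩)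
        * ∏ i ∈ ((Finset.Icc 2 d).erase 2).attach,
            trans i.1
              (y ⟨i.1, by
                have h := i.2
                rw [Finset.mem_erase, Finset.mem_Icc] at h
                omega⟩)
              (y ⟨i.1 - 1, by
                have h := i.2
                rw [Finset.mem_erase, Finset.mem_Icc] at h
                omega⟩), ?_⟩
    intro x
    rw [hf x, ← Finset.mul_prod_erase _ _ h2, htr 2 h2]
    simp only [Finset.mul_sum, Finset.sum_mul, show (2:ℕ) - 1 = 1 from rfl]
    refine Finset.sum_congr rfl fun k _ => ?_
    rw [Finset.prod_attach _ (fun i => trans i (x i) (x (i - 1)))]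
    ring
  · have hdm : d ∈ Finset.Icc 2 d := by simp only [Finset.mem_Icc]; omega
    refine ⟨fun k e => u d k e,
      fun k y => f₁ (y ⟨1, by omega⟩) * v d k (y ⟨d-1, by omega⟩)
        * ∏ i ∈ ((Finset.Icc 2 d).erase d).attach,
            trans i.1
              (y ⟨i.1, by
                have h := i.2
                rw [Finset.mem_erase, Finset.mem_Icc] at h
                omega⟩)
              (y ⟨i.1 - 1, by
                have h := i.2
                rw [Finset.mem_erase, Finset.mem_Icc] at h
                omega⟩), ?_⟩
    intro x
    rw [hf x, ← Finset.mul_prod_erase _ _ hdm, htr d hdm]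
    simp only [Finset.mul_sum, Finset.sum_mul]
    refine Finset.sum_congr rfl fun k _ => ?_
    rw [Finset.prod_attach _ (fun i => trans i (x i) (x (i - 1)))]
    ring
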